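/- arXiv:0807.4235 — 5 statements merged into one kernel-verified Lean document; each statement's English description precedes it below -/
import Mathlib

section
/- Let U →∂' V →∂ W be linear maps between finite-dimensional real inner product spaces with ∂ ∘ ∂' = 0. Then V decomposes as an orthogonal direct sum V = ker □ ⊕ im ∂' ⊕ im ∂*, where □ = ∂*∂ + ∂'(∂')* is the Laplacian (Hodge decomposition). -/
open ContinuousLinearMap

set_option maxHeartbeats 1000000

/-- Hodge decomposition for a two-step complex:
`V = ker □ ⊕ im ∂' ⊕ im ∂*`, an orthogonal direct sum. -/
theorem stmt1 (U V W : Type)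
    [NormedAddCommGroup U] [InnerProductSpace ℝ U] [FiniteDimensional ℝ U]
    [NormedAddCommGroup V] [InnerProductSpace ℝ V] [FiniteDimensional ℝ V]
    [NormedAddCommGroup W] [InnerProductSpace ℝ W] [FiniteDimensional ℝ W]
    (d : V →L[ℝ] W) (d' : U →L[ℝ] V) (hdd : d.comp d' = 0)
    (box : V →L[ℝ] V)
    (hbox : box = (ContinuousLinearMap.adjoint d).comp d
      + d'.comp (ContinuousLinearMap.adjoint d')) :
    (LinearMap.ker (box : V →ₗ[ℝ] V) ⊔ LinearMap.range (d' : U →ₗ[ℝ] V)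
        ⊔ LinearMap.range (ContinuousLinearMap.adjoint d : W →ₗ[ℝ] V) = ⊤) ∧
    (∀ x ∈ LinearMap.ker (box : V →ₗ[ℝ] V), ∀ y ∈ LinearMap.range (d' : U →ₗ[ℝ] V), (inner ℝ x y : ℝ) = 0) ∧
    (∀ x ∈ LinearMap.ker (box : V →ₗ[ℝ] V), ∀ y ∈ LinearMap.range (ContinuousLinearMap.adjoint d : W →ₗ[ℝ] V),
      (inner ℝ x y : ℝ) = 0) ∧
    (∀ x ∈ LinearMap.range (d' : U →ₗ[ℝ] V), ∀ y ∈ LinearMap.range (ContinuousLinearMap.adjoint d : W →ₗ[ℝ] V),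
      (inner ℝ x y : ℝ) = 0) := by
  -- key: x ∈ ker box → d x = 0 ∧ adjoint d' x = 0
  have key : ∀ x ∈ LinearMap.ker (box : V →ₗ[ℝ] V), d x = 0 ∧ (ContinuousLinearMap.adjoint d') x = 0 := by
    intro x hx
    have hx0 : box x = 0 := hx
    have h0 : (inner ℝ (box x) x : ℝ) = 0 := by rw [hx0]; simp
    rw [hbox] at h0
    simp only [ContinuousLinearMap.add_apply, ContinuousLinearMap.comp_apply,
      inner_add_left] at h0
    rw [ContinuousLinearMap.adjoint_inner_left] at h0
    have h1 : (inner ℝ (d' ((ContinuousLinearMap.adjoint d') x)) x : ℝ)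
        = inner ℝ ((ContinuousLinearMap.adjoint d') x) ((ContinuousLinearMap.adjoint d') x) := by
      rw [real_inner_comm, ContinuousLinearMap.adjoint_inner_left, real_inner_comm]
    rw [h1, real_inner_self_eq_norm_sq, real_inner_self_eq_norm_sq] at h0
    have hd : ‖d x‖ = 0 ∧ ‖(ContinuousLinearMap.adjoint d') x‖ = 0 := by
      constructor <;> nlinarith [norm_nonneg (d x),
        norm_nonneg ((ContinuousLinearMap.adjoint d') x)]
    exact ⟨norm_eq_zero.mp hd.1, norm_eq_zero.mp hd.2⟩
  refine ⟨?_, ?_, ?_, ?_⟩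
  · -- sup = ⊤
    rw [← Submodule.orthogonal_eq_bot_iff]
    rw [Submodule.eq_bot_iff]
    intro x hx
    have h1 : x ∈ (LinearMap.range (d' : U →ₗ[ℝ] V))ᗮ := by
      refine Submodule.orthogonal_le ?_ hx
      exact le_sup_of_le_left le_sup_right
    have h2 : x ∈ (LinearMap.range (ContinuousLinearMap.adjoint d : W →ₗ[ℝ] V))ᗮ := by
      refine Submodule.orthogonal_le ?_ hx
      exact le_sup_right
    have h3 : x ∈ (LinearMap.ker (box : V →ₗ[ℝ] V))ᗮ := by
      refine Submodule.orthogonal_le ?_ hx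
      exact le_sup_of_le_left le_sup_left
    have hd' : (ContinuousLinearMap.adjoint d') x = 0 := by
      have := (Submodule.mem_orthogonal _ _).mp h1 (d' ((ContinuousLinearMap.adjoint d') x))
        (LinearMap.mem_range_self _ _)
      rw [real_inner_comm, ← ContinuousLinearMap.adjoint_inner_left] at this
      exact inner_self_eq_zero.mp this
    have hd : d x = 0 := by
      have := (Submodule.mem_orthogonal _ _).mp h2 ((ContinuousLinearMap.adjoint d) (d x))
        (LinearMap.mem_range_self _ _)
      rw [ContinuousLinearMap.adjoint_inner_left] at this
      exact inner_self_eq_zero.mp this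
    have hker : x ∈ LinearMap.ker (box : V →ₗ[ℝ] V) := by
      rw [LinearMap.mem_ker]
      rw [hbox]
      simp only [ContinuousLinearMap.coe_coe, ContinuousLinearMap.add_apply, ContinuousLinearMap.comp_apply, hd, hd',
        map_zero, add_zero]
    have := (Submodule.mem_orthogonal _ _).mp h3 x hker
    exact inner_self_eq_zero.mp this
  · intro x hx y hy
    obtain ⟨u, rfl⟩ := hy
    simp only [ContinuousLinearMap.coe_coe]
    rw [real_inner_comm, ← ContinuousLinearMap.adjoint_inner_right, (key x hx).2]
    simp
  · intro x hx y hy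
    obtain ⟨w, rfl⟩ := hy
    simp only [ContinuousLinearMap.coe_coe]
    rw [real_inner_comm, ContinuousLinearMap.adjoint_inner_left, (key x hx).1]
    simp
  · intro x hx y hy
    obtain ⟨u, rfl⟩ := hx
    obtain ⟨w, rfl⟩ := hy
    simp only [ContinuousLinearMap.coe_coe]
    rw [real_inner_comm, ContinuousLinearMap.adjoint_inner_left]
    have : d (d' u) = 0 := by
      have := congrArg (fun f => f u) hdd
      simpa using this
    rw [this]
    simp
end

section
/- Let i : C → D be an injective chain map between bounded chain complexes of finite-dimensional real inner product spaces inducing isomorphisms on homology. Define inductively V_top = (im i)^⊥ in the top degree and V_k = (im i ⊕ ∂V_{k+1})^⊥ in degree k. Then for every k, C_k(D) = im i ⊕ ∂V_{k+1} ⊕ V_k, with V_k orthogonal to im i ⊕ ∂V_{k+1}; in particular im i ∩ ∂V_{k+1} = 0. -/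
/-- the canonical decomposition `C_k(D) = im i ⊕ ∂V_{k+1} ⊕ V_k`
for an injective chain map `i` between bounded chain complexes of
finite-dimensional real inner product spaces inducing isomorphisms on homology,
where `V_top = (im i)ᗮ` and `V_k = (im i ⊕ ∂V_{k+1})ᗮ`. -/
theorem stmt6 (C D : ℕ → Type)
    [∀ n, NormedAddCommGroup (C n)] [∀ n, InnerProductSpace ℝ (C n)]
    [∀ n, FiniteDimensional ℝ (C n)]
    [∀ n, NormedAddCommGroup (D n)] [∀ n, InnerProductSpace ℝ (D n)]
    [∀ n, FiniteDimensional ℝ (D n)]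
    (N : ℕ) (hbdC : ∀ n, N < n → Subsingleton (C n)) (hbdD : ∀ n, N < n → Subsingleton (D n))
    (dC : ∀ n, C (n + 1) →ₗ[ℝ] C n) (dD : ∀ n, D (n + 1) →ₗ[ℝ] D n)
    (hdC : ∀ n, (dC n).comp (dC (n + 1)) = 0)
    (hdD : ∀ n, (dD n).comp (dD (n + 1)) = 0)
    (i : ∀ n, C n →ₗ[ℝ] D n)
    (hchain : ∀ n, (dD n).comp (i (n + 1)) = (i n).comp (dC n))
    (hinj : ∀ n, Function.Injective (i n))
    -- `i` induces isomorphisms on homology in all degrees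
    (hHsurj : ∀ n, ∀ x : D (n + 1), dD n x = 0 →
      ∃ y : C (n + 1), dC n y = 0 ∧ ∃ z : D (n + 2), x = i (n + 1) y + dD (n + 1) z)
    (hHsurj0 : ∀ x : D 0, ∃ y : C 0, ∃ z : D 1, x = i 0 y + dD 0 z)
    (hHinj : ∀ n, ∀ y : C (n + 1), dC n y = 0 →
      (∃ z : D (n + 2), i (n + 1) y = dD (n + 1) z) → ∃ w : C (n + 2), y = dC (n + 1) w)
    (hHinj0 : ∀ y : C 0, (∃ z : D 1, i 0 y = dD 0 z) → ∃ w : C 1, y = dC 0 w)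
    -- the canonical subspaces, defined inductively from the top degree
    (V : ∀ n, Submodule ℝ (D n))
    (hV : ∀ k, V k = (LinearMap.range (i k) ⊔ (V (k + 1)).map (dD k))ᗮ) :
    ∀ k, (LinearMap.range (i k) ⊓ (V (k + 1)).map (dD k) = ⊥) ∧
      (LinearMap.range (i k) ⊔ (V (k + 1)).map (dD k) ⊔ V k = ⊤) ∧
      (∀ x ∈ LinearMap.range (i k) ⊔ (V (k + 1)).map (dD k),
        ∀ y ∈ V k, (inner ℝ x y : ℝ) = 0) := by

  have hsup : ∀ n, (LinearMap.range (i n) ⊔ (V (n + 1)).map (dD n)) ⊔ V n = ⊤ := by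
    intro n
    rw [hV n]
    exact Submodule.sup_orthogonal_of_hasOrthogonalProjection
  have claimA : ∀ n (z : D (n + 1)), dD n z ∈
      LinearMap.range (i n) ⊔ (V (n + 1)).map (dD n) := by
    intro n z
    have hz : z ∈ (LinearMap.range (i (n+1)) ⊔ (V (n + 2)).map (dD (n+1))) ⊔ V (n+1) := by
      rw [hsup (n+1)]; trivial
    obtain ⟨a, ha, b, hb, rfl⟩ := Submodule.mem_sup.mp hz
    obtain ⟨a1, ha1, a2, ha2, rfl⟩ := Submodule.mem_sup.mp ha
    obtain ⟨c, rfl⟩ := ha1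
    obtain ⟨u, hu, rfl⟩ := ha2
    have h1 : dD n (i (n+1) c) = i n (dC n c) := LinearMap.congr_fun (hchain n) c
    have h2 : dD n (dD (n+1) u) = 0 := LinearMap.congr_fun (hdD n) u
    rw [map_add, map_add, h1, h2, add_zero]
    exact Submodule.add_mem _
      (Submodule.mem_sup_left ⟨dC n c, rfl⟩)
      (Submodule.mem_sup_right ⟨b, hb, rfl⟩)
  intro k
  refine ⟨?_, hsup k, ?_⟩
  · rw [eq_bot_iff]
    rintro x ⟨hx1, hx2⟩
    obtain ⟨y, hy⟩ := hx1
    obtain ⟨v, hvmem, hdv⟩ := hx2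
    -- y is a boundary
    obtain ⟨w, hw⟩ : ∃ w : C (k + 1), y = dC k w := by
      cases k with
      | zero => exact hHinj0 y ⟨v, hy.trans hdv.symm⟩
      | succ n =>
        have hcy : i n (dC n y) = 0 := by
          have h1 : dD n (i (n+1) y) = i n (dC n y) := LinearMap.congr_fun (hchain n) y
          have h2 : dD n (dD (n+1) v) = 0 := LinearMap.congr_fun (hdD n) v
          rw [← h1, hy, ← hdv, h2]
        have hcy' : dC n y = 0 := by
          apply hinj n
          rw [hcy, map_zero]
        exact hHinj n y hcy' ⟨v, hy.trans hdv.symm⟩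
    have hcyc : dD k (v - i (k+1) w) = 0 := by
      have h1 : dD k (i (k+1) w) = i k (dC k w) := LinearMap.congr_fun (hchain k) w
      rw [map_sub, h1, ← hw, hy, hdv, sub_self]
    obtain ⟨y', hy', z, hz⟩ := hHsurj k _ hcyc
    have hvW : v ∈ LinearMap.range (i (k+1)) ⊔ (V (k + 2)).map (dD (k+1)) := by
      have hv' : v = i (k+1) (w + y') + dD (k+1) z := by
        rw [map_add]
        have := hz
        rw [sub_eq_iff_eq_add] at this
        rw [this]; abel
      rw [hv']
      exact Submodule.add_mem _ (Submodule.mem_sup_left ⟨w + y', rfl⟩) (claimA (k+1) z)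
    have hv0 : v = 0 := by
      have horth : v ∈ (LinearMap.range (i (k+1)) ⊔ (V (k + 2)).map (dD (k+1)))ᗮ := by
        rw [← hV (k+1)]; exact hvmem
      have := (Submodule.mem_orthogonal _ _).mp horth v hvW
      exact inner_self_eq_zero.mp this
    rw [Submodule.mem_bot, ← hdv, hv0, map_zero]
  · intro x hx y hy
    rw [hV k] at hy
    exact (Submodule.mem_orthogonal _ _).mp hy x hx
end

section
/- Let i : C → D be an injective chain map between bounded chain complexes of finite-dimensional real inner product spaces inducing isomorphisms on homology, with the canonical decomposition C_k(D) = im i ⊕ ∂V_{k+1} ⊕ V_k as above. Then the boundary map of D restricted to V_k is injective for every k. -/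
/-- in the canonical decomposition, the boundary map of `D`
restricted to `V_k` is injective for every `k`. -/
theorem stmt7 (C D : ℕ → Type)
    [∀ n, NormedAddCommGroup (C n)] [∀ n, InnerProductSpace ℝ (C n)]
    [∀ n, FiniteDimensional ℝ (C n)]
    [∀ n, NormedAddCommGroup (D n)] [∀ n, InnerProductSpace ℝ (D n)]
    [∀ n, FiniteDimensional ℝ (D n)]
    (N : ℕ) (hbdC : ∀ n, N < n → Subsingleton (C n)) (hbdD : ∀ n, N < n → Subsingleton (D n))
    (dC : ∀ n, C (n + 1) →ₗ[ℝ] C n) (dD : ∀ n, D (n + 1) →ₗ[ℝ] D n)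
    (hdC : ∀ n, (dC n).comp (dC (n + 1)) = 0)
    (hdD : ∀ n, (dD n).comp (dD (n + 1)) = 0)
    (i : ∀ n, C n →ₗ[ℝ] D n)
    (hchain : ∀ n, (dD n).comp (i (n + 1)) = (i n).comp (dC n))
    (hinj : ∀ n, Function.Injective (i n))
    -- `i` induces isomorphisms on homology in all degrees
    (hHsurj : ∀ n, ∀ x : D (n + 1), dD n x = 0 →
      ∃ y : C (n + 1), dC n y = 0 ∧ ∃ z : D (n + 2), x = i (n + 1) y + dD (n + 1) z)
    (hHsurj0 : ∀ x : D 0, ∃ y : C 0, ∃ z : D 1, x = i 0 y + dD 0 z)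
    (hHinj : ∀ n, ∀ y : C (n + 1), dC n y = 0 →
      (∃ z : D (n + 2), i (n + 1) y = dD (n + 1) z) → ∃ w : C (n + 2), y = dC (n + 1) w)
    (hHinj0 : ∀ y : C 0, (∃ z : D 1, i 0 y = dD 0 z) → ∃ w : C 1, y = dC 0 w)
    -- the canonical subspaces, defined inductively from the top degree
    (V : ∀ n, Submodule ℝ (D n))
    (hV : ∀ k, V k = (LinearMap.range (i k) ⊔ (V (k + 1)).map (dD k))ᗮ) :
    ∀ k, ∀ x ∈ V (k + 1), dD k x = 0 → x = 0 := by
  intro k x hx hdx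
  obtain ⟨y, hy, z, hz⟩ := hHsurj k x hdx
  have htop : (LinearMap.range (i (k + 2)) ⊔ (V (k + 3)).map (dD (k + 2))) ⊔ V (k + 2)
      = ⊤ := by
    conv_lhs => rw [hV (k + 2)]
    exact Submodule.sup_orthogonal_of_hasOrthogonalProjection
  have hz2 : z ∈ ((LinearMap.range (i (k + 2)) ⊔ (V (k + 3)).map (dD (k + 2))) ⊔ V (k + 2)) := by
    rw [htop]; trivial
  obtain ⟨w, hw, v, hv, rfl⟩ := Submodule.mem_sup.mp hz2
  obtain ⟨p, hp, q, hq, rfl⟩ := Submodule.mem_sup.mp hw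
  obtain ⟨a, rfl⟩ := hp
  obtain ⟨b, hb, rfl⟩ := hq
  have hxmem : x ∈ (LinearMap.range (i (k + 1)) ⊔ (V (k + 2)).map (dD (k + 1))) := by
    have h1 : dD (k + 1) (i (k + 2) a) = i (k + 1) (dC (k + 1) a) :=
      LinearMap.congr_fun (hchain (k + 1)) a
    have h2 : dD (k + 1) (dD (k + 2) b) = 0 := LinearMap.congr_fun (hdD (k + 1)) b
    have hx' : x = i (k + 1) (y + dC (k + 1) a) + dD (k + 1) v := by
      rw [hz, map_add, map_add, map_add, h1, h2]
      abel
    rw [hx']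
    exact Submodule.add_mem_sup ⟨_, rfl⟩ ⟨v, hv, rfl⟩
  have hxo : x ∈ (LinearMap.range (i (k + 1)) ⊔ (V (k + 2)).map (dD (k + 1)))ᗮ := by
    rw [← hV (k + 1)]; exact hx
  exact (Submodule.mem_bot ℝ).mp
    ((Submodule.orthogonal_disjoint _).le_bot ⟨hxmem, hxo⟩)
end

section
/- Let i : C → D be an injective chain map between bounded chain complexes of finite-dimensional real inner product spaces inducing isomorphisms on homology, with the canonical decomposition C_k(D) = im i ⊕ ∂V_{k+1} ⊕ V_k. Writing s_k(C) = dim C_k and s_k(D) = dim D_k, one has dim V_0 = 0 and, for k ≥ 1, dim V_k = (−1)^k ( Σ_{j=0}^{k−1} (−1)^j s_j(C) − Σ_{j=0}^{k−1} (−1)^j s_j(D) ). In particular dim V_1 = s_0(D) − s_0(C). -/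
/-- dimension formula for the canonical subspaces `V_k`:
`dim V_0 = 0` and, for `k ≥ 1`,
`dim V_k = (−1)^k (Σ_{j<k} (−1)^j dim C_j − Σ_{j<k} (−1)^j dim D_j)`;
in particular `dim V_1 = dim D_0 − dim C_0`. -/
theorem stmt8 (C D : ℕ → Type)
    [∀ n, NormedAddCommGroup (C n)] [∀ n, InnerProductSpace ℝ (C n)]
    [∀ n, FiniteDimensional ℝ (C n)]
    [∀ n, NormedAddCommGroup (D n)] [∀ n, InnerProductSpace ℝ (D n)]
    [∀ n, FiniteDimensional ℝ (D n)]
    (N : ℕ) (hbdC : ∀ n, N < n → Subsingleton (C n)) (hbdD : ∀ n, N < n → Subsingleton (D n))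
    (dC : ∀ n, C (n + 1) →ₗ[ℝ] C n) (dD : ∀ n, D (n + 1) →ₗ[ℝ] D n)
    (hdC : ∀ n, (dC n).comp (dC (n + 1)) = 0)
    (hdD : ∀ n, (dD n).comp (dD (n + 1)) = 0)
    (i : ∀ n, C n →ₗ[ℝ] D n)
    (hchain : ∀ n, (dD n).comp (i (n + 1)) = (i n).comp (dC n))
    (hinj : ∀ n, Function.Injective (i n))
    -- `i` induces isomorphisms on homology in all degrees
    (hHsurj : ∀ n, ∀ x : D (n + 1), dD n x = 0 →
      ∃ y : C (n + 1), dC n y = 0 ∧ ∃ z : D (n + 2), x = i (n + 1) y + dD (n + 1) z)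
    (hHsurj0 : ∀ x : D 0, ∃ y : C 0, ∃ z : D 1, x = i 0 y + dD 0 z)
    (hHinj : ∀ n, ∀ y : C (n + 1), dC n y = 0 →
      (∃ z : D (n + 2), i (n + 1) y = dD (n + 1) z) → ∃ w : C (n + 2), y = dC (n + 1) w)
    (hHinj0 : ∀ y : C 0, (∃ z : D 1, i 0 y = dD 0 z) → ∃ w : C 1, y = dC 0 w)
    -- the canonical subspaces, defined inductively from the top degree
    (V : ∀ n, Submodule ℝ (D n))
    (hV : ∀ k, V k = (LinearMap.range (i k) ⊔ (V (k + 1)).map (dD k))ᗮ) :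
    Module.finrank ℝ (V 0) = 0 ∧
      (∀ k, 1 ≤ k → (Module.finrank ℝ (V k) : ℤ) =
        (-1) ^ k * ((∑ j ∈ Finset.range k, (-1) ^ j * (Module.finrank ℝ (C j) : ℤ))
          - ∑ j ∈ Finset.range k, (-1) ^ j * (Module.finrank ℝ (D j) : ℤ))) ∧
      (Module.finrank ℝ (V 1) : ℤ)
        = (Module.finrank ℝ (D 0) : ℤ) - (Module.finrank ℝ (C 0) : ℤ) := by

  classical
  -- decomposition lemma: the image of any boundary lies in `im i ⊔ ∂V`
  have decomp : ∀ k (z : D (k + 1)), ∃ a : C k, ∃ u ∈ V (k + 1),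
      dD k z = i k a + dD k u := by
    intro k z
    have htop : (LinearMap.range (i (k + 1)) ⊔ (V (k + 2)).map (dD (k + 1))) ⊔ V (k + 1)
        = ⊤ := by
      conv_lhs => rw [hV (k + 1)]
      exact Submodule.sup_orthogonal_of_hasOrthogonalProjection
    have hz : z ∈ (LinearMap.range (i (k + 1)) ⊔ (V (k + 2)).map (dD (k + 1))) ⊔ V (k + 1) := by
      rw [htop]; trivial
    rcases Submodule.mem_sup.mp hz with ⟨w, hw, u, hu, rfl⟩
    rcases Submodule.mem_sup.mp hw with ⟨p, hp, q, hq, rfl⟩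
    rcases hp with ⟨a, rfl⟩
    rcases Submodule.mem_map.mp hq with ⟨q', _, rfl⟩
    refine ⟨dC k a, u, hu, ?_⟩
    have h1 : dD k (i (k + 1) a) = i k (dC k a) := LinearMap.congr_fun (hchain k) a
    have h2 : dD k (dD (k + 1) q') = 0 := LinearMap.congr_fun (hdD k) q'
    rw [map_add, map_add, h1, h2, add_zero]
  -- key injectivity property
  have keyA : ∀ k (v : D (k + 1)), v ∈ V (k + 1) → ∀ y : C k,
      i k y + dD k v = 0 → v = 0 := by
    intro k v hv y hy
    have hiy : i k y = dD k (-v) := by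
      rw [map_neg]
      exact eq_neg_of_add_eq_zero_left hy
    have hw : ∃ w : C (k + 1), y = dC k w := by
      cases k with
      | zero => exact hHinj0 y ⟨-v, hiy⟩
      | succ n =>
        have hcyc : dC n y = 0 := by
          apply hinj n
      
        
          have h1 : dD n (i (n + 1) y) = i n (dC n y) := LinearMap.congr_fun (hchain n) y
          have h2 : dD n (dD (n + 1) (-v)) = 0 := LinearMap.congr_fun (hdD n) (-v)
          rw [map_zero, ← h1, hiy, h2]
        exact hHinj n y hcyc ⟨-v, hiy⟩
    obtain ⟨w, rfl⟩ := hw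
    have h0 : dD k (i (k + 1) w + v) = 0 := by
      have hc : dD k (i (k + 1) w) = i k (dC k w) := LinearMap.congr_fun (hchain k) w
      rw [map_add, hc]
      exact hy
    obtain ⟨y2, -, z, hz⟩ := hHsurj k (i (k + 1) w + v) h0
    obtain ⟨a, u, hu, hdz⟩ := decomp (k + 1) z
    have hvmem : v ∈ LinearMap.range (i (k + 1)) ⊔ (V (k + 2)).map (dD (k + 1)) := by
      refine Submodule.mem_sup.mpr ⟨i (k + 1) (y2 + a - w), ⟨_, rfl⟩,
        dD (k + 1) u, Submodule.mem_map_of_mem hu, ?_⟩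
      rw [hdz] at hz
      have hv' : v = i (k + 1) y2 + (i (k + 1) a + dD (k + 1) u) - i (k + 1) w := by
        rw [← hz]; abel
      rw [hv', map_sub, map_add]; abel
    rw [hV (k + 1)] at hv
    have hz0 : (inner ℝ v v : ℝ) = 0 := (Submodule.mem_orthogonal _ v).mp hv v hvmem
    exact inner_self_eq_zero.mp hz0
  -- dimension recursion
  have dimrec : ∀ k, Module.finrank ℝ (D k) =
      Module.finrank ℝ (C k) + Module.finrank ℝ (V (k + 1)) + Module.finrank ℝ (V k) := by
    intro k
    have h1 : Module.finrank ℝ ↥(LinearMap.range (i k) ⊔ (V (k + 1)).map (dD k))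
        + Module.finrank ℝ (V k) = Module.finrank ℝ (D k) := by
      conv_lhs => rw [hV k]
      exact Submodule.finrank_add_finrank_orthogonal _
    have hinf : LinearMap.range (i k) ⊓ (V (k + 1)).map (dD k) = ⊥ := by
      rw [eq_bot_iff]
      rintro x ⟨⟨y, rfl⟩, hx2⟩
      rcases Submodule.mem_map.mp hx2 with ⟨v, hv, hveq⟩
      have hv0 : v = 0 := by
        refine keyA k v hv (-y) ?_
        rw [map_neg, hveq, neg_add_cancel]
      rw [← hveq, hv0, map_zero]
      exact Submodule.zero_mem _
    have hrange : Module.finrank ℝ ↥(LinearMap.range (i k)) = Module.finrank ℝ (C k) :=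
      LinearMap.finrank_range_of_inj (hinj k)
    have hmapinj : Function.Injective ((dD k).comp (V (k + 1)).subtype) := by
      intro x y hxy
      have hmem : ((x : D (k + 1)) - y) ∈ V (k + 1) := sub_mem x.2 y.2
      have h0 : i k 0 + dD k ((x : D (k + 1)) - y) = 0 := by
        simp only [map_zero, zero_add, map_sub]
        simpa using sub_eq_zero.mpr hxy
      have := keyA k _ hmem 0 h0
      exact Subtype.ext (sub_eq_zero.mp this)
    have hmap : Module.finrank ℝ ↥((V (k + 1)).map (dD k)) = Module.finrank ℝ (V (k + 1)) := by
      have heq : (V (k + 1)).map (dD k) = LinearMap.range ((dD k).comp (V (k + 1)).subtype) := by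
        rw [LinearMap.range_comp, Submodule.range_subtype]
      rw [heq, LinearMap.finrank_range_of_inj hmapinj]
    have h2 := Submodule.finrank_sup_add_finrank_inf_eq
      (LinearMap.range (i k)) ((V (k + 1)).map (dD k))
    rw [hinf, hrange, hmap] at h2
    simp only [finrank_bot, add_zero] at h2
    omega
  -- `V 0 = ⊥`
  have hV0 : Module.finrank ℝ (V 0) = 0 := by
    have htop : LinearMap.range (i 0) ⊔ (V 1).map (dD 0) = ⊤ := by
      rw [eq_top_iff]
      rintro x -
      obtain ⟨y, z, hxyz⟩ := hHsurj0 x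
      obtain ⟨a, u, hu, hdz⟩ := decomp 0 z
      rw [hxyz, hdz]
      exact add_mem (Submodule.mem_sup_left ⟨y, rfl⟩)
        (add_mem (Submodule.mem_sup_left ⟨a, rfl⟩)
          (Submodule.mem_sup_right (Submodule.mem_map_of_mem hu)))
    rw [hV 0, htop, Submodule.top_orthogonal_eq_bot, finrank_bot]
  -- the main formula, for all k
  have main : ∀ k, (Module.finrank ℝ (V k) : ℤ) =
      (-1) ^ k * ((∑ j ∈ Finset.range k, (-1) ^ j * (Module.finrank ℝ (C j) : ℤ))
        - ∑ j ∈ Finset.range k, (-1) ^ j * (Module.finrank ℝ (D j) : ℤ)) := by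
    intro k
    induction k with
    | zero => simp [hV0]
    | succ n ih =>
      have hrec := dimrec n
      have hstep : (Module.finrank ℝ (V (n + 1)) : ℤ) =
          (Module.finrank ℝ (D n) : ℤ) - (Module.finrank ℝ (C n) : ℤ)
            - (Module.finrank ℝ (V n) : ℤ) := by
        push_cast
        omega
      rw [hstep, ih, Finset.sum_range_succ, Finset.sum_range_succ]
      have he : (-1 : ℤ) ^ n * (-1) ^ n = 1 := by
        rw [← pow_add]
        exact Even.neg_one_pow ⟨n, rfl⟩
      linear_combination ((Module.finrank ℝ (C n) : ℤ) - (Module.finrank ℝ (D n) : ℤ)) * he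
  refine ⟨hV0, fun k _ => main k, ?_⟩
  have h1 := main 1
  simpa using h1
end

section
/- Let i : C → D be an injective chain map between bounded chain complexes of finite-dimensional real inner product spaces inducing isomorphisms on homology, with canonical subspaces V_k as above. Then for every k ≥ 1, the alternating sum Σ_{j=0}^{k−1} (−1)^j (dim D_j − dim C_j) is nonnegative when k is odd and nonpositive when k is even. -/
/-- for every `k ≥ 1`, the alternating sum
`Σ_{j<k} (−1)^j (dim D_j − dim C_j)` is nonnegative for odd `k`
and nonpositive for even `k`. -/
theorem stmt9 (C D : ℕ → Type)
    [∀ n, NormedAddCommGroup (C n)] [∀ n, InnerProductSpace ℝ (C n)]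
    [∀ n, FiniteDimensional ℝ (C n)]
    [∀ n, NormedAddCommGroup (D n)] [∀ n, InnerProductSpace ℝ (D n)]
    [∀ n, FiniteDimensional ℝ (D n)]
    (N : ℕ) (hbdC : ∀ n, N < n → Subsingleton (C n)) (hbdD : ∀ n, N < n → Subsingleton (D n))
    (dC : ∀ n, C (n + 1) →ₗ[ℝ] C n) (dD : ∀ n, D (n + 1) →ₗ[ℝ] D n)
    (hdC : ∀ n, (dC n).comp (dC (n + 1)) = 0)
    (hdD : ∀ n, (dD n).comp (dD (n + 1)) = 0)
    (i : ∀ n, C n →ₗ[ℝ] D n)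
    (hchain : ∀ n, (dD n).comp (i (n + 1)) = (i n).comp (dC n))
    (hinj : ∀ n, Function.Injective (i n))
    -- `i` induces isomorphisms on homology in all degrees
    (hHsurj : ∀ n, ∀ x : D (n + 1), dD n x = 0 →
      ∃ y : C (n + 1), dC n y = 0 ∧ ∃ z : D (n + 2), x = i (n + 1) y + dD (n + 1) z)
    (hHsurj0 : ∀ x : D 0, ∃ y : C 0, ∃ z : D 1, x = i 0 y + dD 0 z)
    (hHinj : ∀ n, ∀ y : C (n + 1), dC n y = 0 →
      (∃ z : D (n + 2), i (n + 1) y = dD (n + 1) z) → ∃ w : C (n + 2), y = dC (n + 1) w)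
    (hHinj0 : ∀ y : C 0, (∃ z : D 1, i 0 y = dD 0 z) → ∃ w : C 1, y = dC 0 w)
    -- the canonical subspaces, defined inductively from the top degree
    (V : ∀ n, Submodule ℝ (D n))
    (hV : ∀ k, V k = (LinearMap.range (i k) ⊔ (V (k + 1)).map (dD k))ᗮ) :
    ∀ k, 1 ≤ k →
      (Odd k → 0 ≤ ∑ j ∈ Finset.range k,
        (-1 : ℤ) ^ j * ((Module.finrank ℝ (D j) : ℤ) - (Module.finrank ℝ (C j) : ℤ))) ∧
      (Even k → ∑ j ∈ Finset.range k,
        (-1 : ℤ) ^ j * ((Module.finrank ℝ (D j) : ℤ) - (Module.finrank ℝ (C j) : ℤ)) ≤ 0) := by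
  classical
  -- Lemma A: the decomposition spans everything
  have hA : ∀ m, (LinearMap.range (i m) ⊔ (V (m+1)).map (dD m)) ⊔ V m = ⊤ := by
    intro m
    conv_lhs => rw [hV m]
    exact Submodule.sup_orthogonal_of_hasOrthogonalProjection
  -- orthogonality helper
  have horth : ∀ m (v : D m), v ∈ V m →
      ∀ u ∈ LinearMap.range (i m) ⊔ (V (m+1)).map (dD m), inner ℝ u v = (0:ℝ) := by
    intro m v hv u hu
    rw [hV m] at hv
    exact (Submodule.mem_orthogonal _ _).mp hv u hu
  -- Lemma B: boundaries lie in range i ⊔ dD(V)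
  have hB : ∀ m (z : D (m+1)), dD m z ∈ LinearMap.range (i m) ⊔ (V (m+1)).map (dD m) := by
    intro m z
    have hz : z ∈ (LinearMap.range (i (m+1)) ⊔ (V (m+2)).map (dD (m+1))) ⊔ V (m+1) := by
      rw [hA (m+1)]; trivial
    rcases Submodule.mem_sup.mp hz with ⟨a, ha, c, hc, rfl⟩
    rcases Submodule.mem_sup.mp ha with ⟨a1, ha1, a2, ha2, rfl⟩
    rcases ha1 with ⟨y, rfl⟩
    rcases ha2 with ⟨w, hw, rfl⟩
    have h1 : dD m (i (m+1) y) = i m (dC m y) := LinearMap.congr_fun (hchain m) y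
    have h2 : dD m (dD (m+1) w) = 0 := LinearMap.congr_fun (hdD m) w
    rw [map_add, map_add, h1, h2, add_zero]
    exact add_mem (Submodule.mem_sup_left ⟨dC m y, rfl⟩)
      (Submodule.mem_sup_right ⟨c, hc, rfl⟩)
  -- Lemma C: dD is injective on V (m+1)
  have hC : ∀ m (v : D (m+1)), v ∈ V (m+1) → dD m v = 0 → v = 0 := by
    intro m v hv h0
    obtain ⟨y, hy, z, hz⟩ := hHsurj m v h0
    have h1 : inner ℝ (i (m+1) y) v = (0:ℝ) :=
      horth _ v hv _ (Submodule.mem_sup_left ⟨y, rfl⟩)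
    have h2 : inner ℝ (dD (m+1) z) v = (0:ℝ) := horth _ v hv _ (hB (m+1) z)
    have : (inner ℝ v v : ℝ) = (0:ℝ) := by
      have : (inner ℝ v v : ℝ) = inner ℝ (i (m+1) y + dD (m+1) z) v := by rw [← hz]
      rw [this, inner_add_left, h1, h2, add_zero]
    exact inner_self_eq_zero.mp this
  -- Lemma E : V 0 = ⊥
  have hE : V 0 = ⊥ := by
    rw [Submodule.eq_bot_iff]
    intro v hv
    obtain ⟨y, z, hz⟩ := hHsurj0 v
    have h1 : inner ℝ (i 0 y) v = (0:ℝ) :=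
      horth _ v hv _ (Submodule.mem_sup_left ⟨y, rfl⟩)
    have h2 : inner ℝ (dD 0 z) v = (0:ℝ) := horth _ v hv _ (hB 0 z)
    have : (inner ℝ v v : ℝ) = (0:ℝ) := by
      have : (inner ℝ v v : ℝ) = inner ℝ (i 0 y + dD 0 z) v := by rw [← hz]
      rw [this, inner_add_left, h1, h2, add_zero]
    exact inner_self_eq_zero.mp this
  -- Lemma D: range i ⊓ dD(V) = ⊥
  have hD : ∀ m, LinearMap.range (i m) ⊓ (V (m+1)).map (dD m) = ⊥ := by
    intro m
    rw [Submodule.eq_bot_iff]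
    rintro x ⟨hx1, hx2⟩
    obtain ⟨y, rfl⟩ := hx1
    obtain ⟨v, hv, hvx⟩ := hx2
    -- produce w with y = dC m w
    have hw : ∃ w : C (m+1), y = dC m w := by
      cases m with
      | zero => exact hHinj0 y ⟨v, hvx.symm⟩
      | succ n =>
        have hcy : dC n y = 0 := by
          apply hinj n
          have e1 : i n (dC n y) = dD n (i (n+1) y) :=
            (LinearMap.congr_fun (hchain n) y).symm
          have e2 : dD n (dD (n+1) v) = 0 := LinearMap.congr_fun (hdD n) v
          rw [map_zero, e1, ← hvx, e2]
        exact hHinj n y hcy ⟨v, hvx.symm⟩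
    obtain ⟨w, rfl⟩ := hw
    have hiw : i m (dC m w) = dD m (i (m+1) w) :=
      (LinearMap.congr_fun (hchain m) w).symm
    have hker : dD m (v - i (m+1) w) = 0 := by
      rw [map_sub, hvx, hiw, sub_self]
    obtain ⟨y', hy', z, hz⟩ := hHsurj m (v - i (m+1) w) hker
    have hveq : v = i (m+1) w + (i (m+1) y' + dD (m+1) z) := by
      have := hz
      rw [sub_eq_iff_eq_add] at this
      rw [this]; abel
    have h1 : inner ℝ (i (m+1) w) v = (0:ℝ) :=
      horth _ v hv _ (Submodule.mem_sup_left ⟨w, rfl⟩)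
    have h2 : inner ℝ (i (m+1) y') v = (0:ℝ) :=
      horth _ v hv _ (Submodule.mem_sup_left ⟨y', rfl⟩)
    have h3 : inner ℝ (dD (m+1) z) v = (0:ℝ) := horth _ v hv _ (hB (m+1) z)
    have hv0 : v = 0 := by
      have : (inner ℝ v v : ℝ) = (0:ℝ) := by
        have : (inner ℝ v v : ℝ) = inner ℝ (i (m+1) w + (i (m+1) y' + dD (m+1) z)) v := by
          rw [← hveq]
        rw [this, inner_add_left, inner_add_left, h1, h2, h3]; ring
      exact inner_self_eq_zero.mp this
    rw [← hvx, hv0, map_zero]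
  -- finrank of the image of V (m+1)
  have e4 : ∀ m, Module.finrank ℝ ((V (m+1)).map (dD m)) = Module.finrank ℝ (V (m+1)) := by
    intro m
    have hrange : LinearMap.range ((dD m).comp (V (m+1)).subtype) = (V (m+1)).map (dD m) := by
      rw [LinearMap.range_comp, Submodule.range_subtype]
    have hinjr : Function.Injective ((dD m).comp (V (m+1)).subtype) := by
      rw [← LinearMap.ker_eq_bot, LinearMap.ker_eq_bot']
      intro a ha
      have : dD m (a : D (m+1)) = 0 := ha
      have := hC m a a.2 this
      exact Subtype.ext this
    rw [← hrange]
    exact LinearMap.finrank_range_of_inj hinjr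
  -- the dimension recursion
  have hdim : ∀ m, Module.finrank ℝ (D m) =
      Module.finrank ℝ (C m) + Module.finrank ℝ (V (m+1)) + Module.finrank ℝ (V m) := by
    intro m
    have e1 : Module.finrank ℝ
        (LinearMap.range (i m) ⊔ (V (m+1)).map (dD m) : Submodule ℝ (D m))
        + Module.finrank ℝ (V m) = Module.finrank ℝ (D m) := by
      conv_lhs => rw [hV m]
      exact Submodule.finrank_add_finrank_orthogonal _
    have e2 := Submodule.finrank_sup_add_finrank_inf_eq
      (LinearMap.range (i m)) ((V (m+1)).map (dD m))
    rw [hD m] at e2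
    simp only [finrank_bot, add_zero] at e2
    have e3 : Module.finrank ℝ (LinearMap.range (i m)) = Module.finrank ℝ (C m) :=
      LinearMap.finrank_range_of_inj (hinj m)
    have e4m := e4 m
    omega
  -- the telescoping identity
  have key : ∀ k, ∑ j ∈ Finset.range k,
      (-1 : ℤ) ^ j * ((Module.finrank ℝ (D j) : ℤ) - (Module.finrank ℝ (C j) : ℤ))
      = -(-1 : ℤ) ^ k * (Module.finrank ℝ (V k) : ℤ) := by
    intro k
    induction k with
    | zero => simp [hE]
    | succ k ih =>
      rw [Finset.sum_range_succ, ih]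
      have hd : (Module.finrank ℝ (D k) : ℤ) = (Module.finrank ℝ (C k) : ℤ)
          + (Module.finrank ℝ (V (k+1)) : ℤ) + (Module.finrank ℝ (V k) : ℤ) := by
        exact_mod_cast hdim k
      rw [hd]; ring
  intro k hk
  constructor
  · intro hodd
    rw [key k, hodd.neg_one_pow]
    simp
  · intro heven
    rw [key k, heven.neg_one_pow]
    simp
end
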